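/- Let O, F, I partition [n] with O nonempty (obligatory, facultative, forbidden indices), and let D be the set of probability vectors q on [n] that are uniform on their support, where the support contains O and is contained in O ∪ F. Then for any fixed j₀ ∈ O, the convex hull of D equals the polytope of x ∈ R^n satisfying: x_j = 0 for j ∈ I; x_j = x_{j₀} for j ∈ O; 0 ≤ x_j ≤ x_{j₀} for j ∈ F; and ∑_j x_j = 1. -/

import Mathlib

open BigOperators

private lemma uniform_case (n : ℕ) (O F I : Finset (Fin n))
    (hcover : O ∪ F ∪ I = Finset.univ)
    (j₀ : Fin n) (hj₀ : j₀ ∈ O)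
    (x : Fin n → ℝ)
    (hI : ∀ j ∈ I, x j = 0) (hOx : ∀ j ∈ O, x j = x j₀)
    (hFx : ∀ j ∈ F, 0 ≤ x j ∧ x j ≤ x j₀) (hsum : ∑ j, x j = 1)
    (hall : ∀ j ∈ F, 0 < x j → x j = x j₀) :
    ∃ S : Finset (Fin n), O ⊆ S ∧ S ⊆ O ∪ F ∧
      ∀ j, x j = if j ∈ S then ((S.card : ℝ))⁻¹ else 0 := by
  classical
  set S : Finset (Fin n) := O ∪ F.filter (fun j => 0 < x j) with hS
  have hmem : ∀ j : Fin n, j ∈ O ∨ j ∈ F ∨ j ∈ I := by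
    intro j
    have h := Finset.mem_univ j
    rw [← hcover] at h
    simpa [Finset.mem_union, or_assoc] using h
  have hOS : O ⊆ S := Finset.subset_union_left
  have hSOF : S ⊆ O ∪ F := by
    intro j hj
    rcases Finset.mem_union.1 hj with h | h
    · exact Finset.mem_union_left _ h
    · exact Finset.mem_union_right _ (Finset.mem_filter.1 h).1
  have hval : ∀ j, x j = if j ∈ S then x j₀ else 0 := by
    intro j
    by_cases hjS : j ∈ S
    · rw [if_pos hjS]
      rcases Finset.mem_union.1 hjS with h | h
      · exact hOx j h
      · obtain ⟨hjF, hjpos⟩ := Finset.mem_filter.1 h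
        exact hall j hjF hjpos
    · rw [if_neg hjS]
      rcases hmem j with h | h | h
      · exact absurd (hOS h) hjS
      · have hnp : ¬ 0 < x j := fun hc =>
          hjS (Finset.mem_union_right _ (Finset.mem_filter.2 ⟨h, hc⟩))
        linarith [(hFx j h).1]
      · exact hI j h
  have hj₀S : j₀ ∈ S := hOS hj₀
  have hcard : (0:ℝ) < S.card := by
    exact_mod_cast Finset.card_pos.2 ⟨j₀, hj₀S⟩
  have hst : (S.card : ℝ) * x j₀ = 1 := by
    have h1 : ∑ j, x j = ∑ j ∈ S, x j := by
      refine (Finset.sum_subset (Finset.subset_univ S) ?_).symm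
      intro j _ hj
      rw [hval j, if_neg hj]
    have h2 : ∑ j ∈ S, x j = ∑ _j ∈ S, x j₀ :=
      Finset.sum_congr rfl (fun j hj => by rw [hval j, if_pos hj])
    rw [Finset.sum_const, nsmul_eq_mul] at h2
    rw [h1, h2] at hsum
    exact hsum
  have ht : x j₀ = ((S.card : ℝ))⁻¹ := by
    exact eq_inv_of_mul_eq_one_left (by rw [mul_comm]; exact hst)
  exact ⟨S, hOS, hSOF, fun j => by rw [hval j, ht]⟩

private lemma aux_ind (n : ℕ) (O F I : Finset (Fin n))
    (hOF : Disjoint O F) (hOI : Disjoint O I) (hFI : Disjoint F I)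
    (hcover : O ∪ F ∪ I = Finset.univ) (hO : O.Nonempty)
    (j₀ : Fin n) (hj₀ : j₀ ∈ O) :
    ∀ k : ℕ, ∀ x : Fin n → ℝ,
      (∀ j ∈ I, x j = 0) → (∀ j ∈ O, x j = x j₀) →
      (∀ j ∈ F, 0 ≤ x j ∧ x j ≤ x j₀) → (∑ j, x j = 1) →
      (F.filter (fun j => 0 < x j)).card ≤ k →
      x ∈ convexHull ℝ
        {q : Fin n → ℝ | ∃ S : Finset (Fin n), O ⊆ S ∧ S ⊆ O ∪ F ∧
          ∀ j, q j = if j ∈ S then ((S.card : ℝ))⁻¹ else 0} := by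
  classical
  have hmem : ∀ j : Fin n, j ∈ O ∨ j ∈ F ∨ j ∈ I := by
    intro j
    have h := Finset.mem_univ j
    rw [← hcover] at h
    simpa [Finset.mem_union, or_assoc] using h
  intro k
  induction k with
  | zero =>
    intro x hI hOx hFx hsum hcard
    apply subset_convexHull
    apply uniform_case n O F I hcover j₀ hj₀ x hI hOx hFx hsum
    intro j hjF hjpos
    exfalso
    have : j ∈ F.filter (fun j => 0 < x j) := Finset.mem_filter.2 ⟨hjF, hjpos⟩
    have := Finset.card_pos.2 ⟨j, this⟩
    omega
  | succ k ih =>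
    intro x hI hOx hFx hsum hcard
    by_cases hall : ∀ j ∈ F, 0 < x j → x j = x j₀
    · exact subset_convexHull ℝ _ (uniform_case n O F I hcover j₀ hj₀ x hI hOx hFx hsum hall)
    · push_neg at hall
      obtain ⟨ja, hjaF, hjapos, hjane⟩ := hall
      set P' : Finset (Fin n) := F.filter (fun j => 0 < x j) with hP'
      have hjaP' : ja ∈ P' := Finset.mem_filter.2 ⟨hjaF, hjapos⟩
      obtain ⟨jm, hjmP, hjmmin⟩ := P'.exists_min_image x ⟨ja, hjaP'⟩
      have hjmF : jm ∈ F := (Finset.mem_filter.1 hjmP).1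
      have hm : 0 < x jm := (Finset.mem_filter.1 hjmP).2
      set S : Finset (Fin n) := O ∪ P' with hSdef
      have hOS : O ⊆ S := Finset.subset_union_left
      have hSOF : S ⊆ O ∪ F := by
        intro j hj
        rcases Finset.mem_union.1 hj with h | h
        · exact Finset.mem_union_left _ h
        · exact Finset.mem_union_right _ (Finset.mem_filter.1 h).1
      have hj₀S : j₀ ∈ S := hOS hj₀
      have hs0 : (0:ℝ) < S.card := by
        exact_mod_cast Finset.card_pos.2 ⟨j₀, hj₀S⟩
      have hsne : (S.card : ℝ) ≠ 0 := ne_of_gt hs0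
      have hzero : ∀ j, j ∉ S → x j = 0 := by
        intro j hjS
        rcases hmem j with h | h | h
        · exact absurd (hOS h) hjS
        · have hnp : ¬ 0 < x j := fun hc =>
            hjS (Finset.mem_union_right _ (Finset.mem_filter.2 ⟨h, hc⟩))
          linarith [(hFx j h).1]
        · exact hI j h
      have hsumS : ∑ j ∈ S, x j = 1 := by
        rw [← hsum]
        exact Finset.sum_subset (Finset.subset_univ S) (fun j _ hj => hzero j hj)
      -- m ≤ x j for all j ∈ S
      have hmle : ∀ j ∈ S, x jm ≤ x j := by
        intro j hj
        rcases Finset.mem_union.1 hj with h | h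
        · rw [hOx j h]
          exact (hFx jm hjmF).2
        · exact hjmmin j h
      have hmlt : x jm < x j₀ := by
        rcases lt_or_eq_of_le (hjmmin ja hjaP') with h | h
        · have := (hFx ja hjaF).2
          linarith
        · rw [h]
          exact lt_of_le_of_ne (hFx ja hjaF).2 hjane
      set lam : ℝ := (S.card : ℝ) * x jm with hlam
      have hlam0 : 0 < lam := mul_pos hs0 hm
      have hlam1 : lam < 1 := by
        have h1 : ∑ _j ∈ S, x jm < ∑ j ∈ S, x j :=
          Finset.sum_lt_sum hmle ⟨j₀, hj₀S, hmlt⟩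
        rw [Finset.sum_const, nsmul_eq_mul, hsumS] at h1
        exact h1
      have h1lam : (0:ℝ) < 1 - lam := by linarith
      have h1lamne : (1:ℝ) - lam ≠ 0 := ne_of_gt h1lam
      set u : Fin n → ℝ := fun j => if j ∈ S then ((S.card : ℝ))⁻¹ else 0 with hu
      have huD : u ∈ {q : Fin n → ℝ | ∃ S : Finset (Fin n), O ⊆ S ∧ S ⊆ O ∪ F ∧
          ∀ j, q j = if j ∈ S then ((S.card : ℝ))⁻¹ else 0} :=
        ⟨S, hOS, hSOF, fun j => rfl⟩
      have husum : ∑ j, u j = 1 := by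
        rw [hu]
        rw [Finset.sum_ite_mem, Finset.univ_inter, Finset.sum_const, nsmul_eq_mul]
        exact mul_inv_cancel₀ hsne
      set y : Fin n → ℝ := fun j => (1 - lam)⁻¹ * (x j - lam * u j) with hy
      have hyS : ∀ j ∈ S, y j = (1 - lam)⁻¹ * (x j - x jm) := by
        intro j hj
        simp only [hy, hu, hj, if_true]
        rw [hlam, mul_comm ((S.card : ℝ)) (x jm), mul_assoc, mul_inv_cancel₀ hsne, mul_one]
      have hyN : ∀ j, j ∉ S → y j = 0 := by
        intro j hj
        simp only [hy, hu, hj, if_false, mul_zero, sub_zero, hzero j hj]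
      have hyj₀ : y j₀ = (1 - lam)⁻¹ * (x j₀ - x jm) := hyS j₀ hj₀S
      have hyI : ∀ j ∈ I, y j = 0 := by
        intro j hjI
        apply hyN
        intro hjS
        rcases Finset.mem_union.1 (hSOF hjS) with h | h
        · exact (Finset.disjoint_left.1 hOI) h hjI
        · exact (Finset.disjoint_left.1 hFI) h hjI
      have hyO : ∀ j ∈ O, y j = y j₀ := by
        intro j hjO
        rw [hyS j (hOS hjO), hyj₀, hOx j hjO]
      have hyF : ∀ j ∈ F, 0 ≤ y j ∧ y j ≤ y j₀ := by
        intro j hjF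
        rw [hyj₀]
        by_cases hjS : j ∈ S
        · rw [hyS j hjS]
          constructor
          · apply mul_nonneg (le_of_lt (inv_pos.2 h1lam))
            linarith [hmle j hjS]
          · apply mul_le_mul_of_nonneg_left _ (le_of_lt (inv_pos.2 h1lam))
            have := (hFx j hjF).2
            linarith
        · rw [hyN j hjS]
          constructor
          · exact le_refl 0
          · apply mul_nonneg (le_of_lt (inv_pos.2 h1lam))
            linarith
      have hysum : ∑ j, y j = 1 := by
        have hyalt : ∀ j, y j = (1 - lam)⁻¹ * x j - (1 - lam)⁻¹ * lam * u j := by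
          intro j; simp only [hy]; ring
        calc ∑ j, y j = ∑ j, ((1 - lam)⁻¹ * x j - (1 - lam)⁻¹ * lam * u j) :=
              Finset.sum_congr rfl (fun j _ => hyalt j)
          _ = 1 := by
              rw [Finset.sum_sub_distrib, ← Finset.mul_sum, ← Finset.mul_sum, hsum, husum]
              field_simp
      have hycard : (F.filter (fun j => 0 < y j)).card ≤ k := by
        have hsub : F.filter (fun j => 0 < y j) ⊆ P'.erase jm := by
          intro j hj
          obtain ⟨hjF, hjy⟩ := Finset.mem_filter.1 hj
          have hjS : j ∈ S := by
            by_contra hjS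
            rw [hyN j hjS] at hjy
            exact lt_irrefl 0 hjy
          rw [hyS j hjS] at hjy
          have hxm : x jm < x j := by
            nlinarith [inv_pos.2 h1lam]
          have hjP' : j ∈ P' := Finset.mem_filter.2 ⟨hjF, lt_trans hm hxm⟩
          exact Finset.mem_erase.2 ⟨fun h => by rw [h] at hxm; exact lt_irrefl _ hxm, hjP'⟩
        have h1 := Finset.card_le_card hsub
        have h2 : (P'.erase jm).card < P'.card := Finset.card_erase_lt_of_mem hjmP
        omega
      have hyconv := ih y hyI hyO hyF hysum hycard
      have hxeq : x = lam • u + (1 - lam) • y := by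
        funext j
        simp only [Pi.add_apply, Pi.smul_apply, smul_eq_mul, hy]
        rw [← mul_assoc, mul_inv_cancel₀ h1lamne, one_mul]
        ring
      rw [hxeq]
      exact (convex_convexHull ℝ _) (subset_convexHull ℝ _ huD) hyconv
        (le_of_lt hlam0) (le_of_lt h1lam) (by ring)

theorem stmt2 (n : ℕ) (O F I : Finset (Fin n))
    (hOF : Disjoint O F) (hOI : Disjoint O I) (hFI : Disjoint F I)
    (hcover : O ∪ F ∪ I = Finset.univ) (hO : O.Nonempty)
    (j₀ : Fin n) (hj₀ : j₀ ∈ O) :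
    convexHull ℝ
      {q : Fin n → ℝ | ∃ S : Finset (Fin n), O ⊆ S ∧ S ⊆ O ∪ F ∧
        ∀ j, q j = if j ∈ S then ((S.card : ℝ))⁻¹ else 0}
    = {x : Fin n → ℝ | (∀ j ∈ I, x j = 0) ∧ (∀ j ∈ O, x j = x j₀) ∧
        (∀ j ∈ F, 0 ≤ x j ∧ x j ≤ x j₀) ∧ ∑ j, x j = 1} := by
  classical
  apply Set.Subset.antisymm
  · apply convexHull_min
    · rintro q ⟨S, hOS, hSOF, hq⟩
      have hj₀S : j₀ ∈ S := hOS hj₀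
      have hscard : 0 < S.card := Finset.card_pos.2 ⟨j₀, hj₀S⟩
      have hq₀ : q j₀ = ((S.card : ℝ))⁻¹ := by rw [hq j₀, if_pos hj₀S]
      have hinv : (0:ℝ) ≤ ((S.card : ℝ))⁻¹ := inv_nonneg.2 (Nat.cast_nonneg _)
      refine ⟨?_, ?_, ?_, ?_⟩
      · intro j hjI
        rw [hq j, if_neg]
        intro hjS
        rcases Finset.mem_union.1 (hSOF hjS) with h | h
        · exact (Finset.disjoint_left.1 hOI) h hjI
        · exact (Finset.disjoint_left.1 hFI) h hjI
      · intro j hjO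
        rw [hq j, if_pos (hOS hjO), hq₀]
      · intro j hjF
        rw [hq j, hq₀]
        by_cases hjS : j ∈ S
        · rw [if_pos hjS]; exact ⟨hinv, le_refl _⟩
        · rw [if_neg hjS]; exact ⟨le_refl _, hinv⟩
      · have : ∑ j, q j = ∑ j, (if j ∈ S then ((S.card : ℝ))⁻¹ else 0) :=
          Finset.sum_congr rfl (fun j _ => hq j)
        rw [this, Finset.sum_ite_mem, Finset.univ_inter, Finset.sum_const, nsmul_eq_mul]
        exact mul_inv_cancel₀ (Nat.cast_ne_zero.2 hscard.ne')
    · intro x hx y hy a b ha hb hab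
      obtain ⟨hxI, hxO, hxF, hxs⟩ := hx
      obtain ⟨hyI, hyO, hyF, hys⟩ := hy
      refine ⟨?_, ?_, ?_, ?_⟩
      · intro j hjI
        simp only [Pi.add_apply, Pi.smul_apply, smul_eq_mul, hxI j hjI, hyI j hjI,
          mul_zero, add_zero]
      · intro j hjO
        simp only [Pi.add_apply, Pi.smul_apply, smul_eq_mul, hxO j hjO, hyO j hjO]
      · intro j hjF
        obtain ⟨h1, h2⟩ := hxF j hjF
        obtain ⟨h3, h4⟩ := hyF j hjF
        simp only [Pi.add_apply, Pi.smul_apply, smul_eq_mul]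
        constructor
        · exact add_nonneg (mul_nonneg ha h1) (mul_nonneg hb h3)
        · exact add_le_add (mul_le_mul_of_nonneg_left h2 ha) (mul_le_mul_of_nonneg_left h4 hb)
      · simp only [Pi.add_apply, Pi.smul_apply, smul_eq_mul]
        rw [Finset.sum_add_distrib, ← Finset.mul_sum, ← Finset.mul_sum, hxs, hys]
        linarith
  · rintro x ⟨hxI, hxO, hxF, hxs⟩
    exact aux_ind n O F I hOF hOI hFI hcover hO j₀ hj₀
      ((F.filter (fun j => 0 < x j)).card) x hxI hxO hxF hxs le_rfl
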